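/- Let m be a positive odd integer and a ∈ ℤ with gcd(a,m) = 1. Then the Jacobi symbol (a/m) satisfies (a/m) = (−1)^{N}, where N = #{k ∈ ℤ : 0 < k < m/2 and {ak}_m > m/2}; moreover (a/m) = (−1)^{K_a}, where K_a = Σ_{0<k<m/2} ⌊2ak/m⌋. -/

import Mathlib

open Finset

namespace Stmt12

/-- The remainder `{a k}_m` as an integer in `[0, m)`. -/
def r (m : ℕ) (a : ℤ) (k : ℕ) : ℤ := (a * k) % (m : ℤ)

/-- The sign `ε(a,k)`. -/
def sg (m : ℕ) (a : ℤ) (k : ℕ) : ℤ := if (m : ℤ) < 2 * r m a k then -1 else 1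

/-- The folded remainder in `[1, m/2]`. -/
def fd (m : ℕ) (a : ℤ) (k : ℕ) : ℕ :=
  if (m : ℤ) < 2 * r m a k then m - (r m a k).toNat else (r m a k).toNat

/-- The Gauss-lemma sign. -/
def G (m : ℕ) (a : ℤ) : ℤ := ∏ k ∈ Finset.Ico 1 (m / 2 + 1), sg m a k

lemma int_small {m : ℕ} {d : ℤ} (h : (m : ℤ) ∣ d) (h2 : |d| < m) : d = 0 := by
  rcases h with ⟨c, rfl⟩
  rcases eq_or_ne c 0 with rfl | hc
  · simp
  · exfalso
    have h1 : (1 : ℤ) ≤ |c| := Int.one_le_abs (by simpa using hc)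
    have hm : (0 : ℤ) ≤ m := by positivity
    have : (m : ℤ) * 1 ≤ (m : ℤ) * |c| := by
      exact mul_le_mul_of_nonneg_left h1 hm
    rw [abs_mul, abs_of_nonneg hm] at h2
    omega

lemma sg_eq (m : ℕ) (a : ℤ) (k : ℕ) : sg m a k = 1 ∨ sg m a k = -1 := by
  unfold sg; split <;> simp

lemma sg_mul_self (m : ℕ) (a : ℤ) (k : ℕ) : sg m a k * sg m a k = 1 := by
  unfold sg; split <;> ring

lemma r_bounds {m : ℕ} (hm : Odd m) {a : ℤ} (ha : IsCoprime a (m : ℤ)) {k : ℕ}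
    (hk : k ∈ Finset.Ico 1 (m / 2 + 1)) :
    0 < r m a k ∧ r m a k < m ∧ 2 * r m a k ≠ m := by
  obtain ⟨t, ht⟩ := hm
  rw [Finset.mem_Ico] at hk
  have hm0 : (0 : ℤ) < m := by exact_mod_cast (show 0 < m by omega)
  have h1 : r m a k < m := Int.emod_lt_of_pos _ hm0
  have h0 : 0 ≤ r m a k := Int.emod_nonneg _ (by omega)
  have hne : r m a k ≠ 0 := by
    intro h
    have hdvd : (m : ℤ) ∣ a * k := Int.dvd_of_emod_eq_zero h
    have : (m : ℤ) ∣ (k : ℤ) := (ha.symm).dvd_of_dvd_mul_left hdvd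
    have : m ∣ k := by exact_mod_cast this
    have := Nat.le_of_dvd (by omega) this
    omega
  refine ⟨by omega, h1, ?_⟩
  intro h
  omega

lemma fd_spec {m : ℕ} (hm : Odd m) {a : ℤ} (ha : IsCoprime a (m : ℤ)) {k : ℕ}
    (hk : k ∈ Finset.Ico 1 (m / 2 + 1)) :
    1 ≤ fd m a k ∧ fd m a k ≤ m / 2 ∧ (m : ℤ) ∣ a * k - sg m a k * fd m a k := by
  obtain ⟨h0, h1, h2⟩ := r_bounds hm ha hk
  obtain ⟨t, ht⟩ := hm
  set R := (r m a k).toNat with hR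
  have hRr : (R : ℤ) = r m a k := Int.toNat_of_nonneg (le_of_lt h0)
  have hdr : (m : ℤ) ∣ a * k - r m a k := Int.dvd_self_sub_of_emod_eq rfl
  have hRb : 0 < R ∧ R < m ∧ 2 * R ≠ m := by
    constructor
    · omega
    constructor
    · omega
    · omega
  unfold fd sg
  rw [← hR]
  by_cases hc : (m : ℤ) < 2 * r m a k
  · rw [if_pos hc, if_pos hc]
    have hRm : m / 2 < R := by omega
    refine ⟨by omega, by omega, ?_⟩
    have : ((m - R : ℕ) : ℤ) = (m : ℤ) - R := by
      have : R ≤ m := by omega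
      push_cast [this]; ring
    rw [this]
    have key : a * ↑k - -1 * ((m : ℤ) - ↑R) = (a * ↑k - r m a k) + m := by
      rw [hRr]; ring
    rw [key]
    exact dvd_add hdr dvd_rfl
  · rw [if_neg hc, if_neg hc]
    refine ⟨by omega, by omega, ?_⟩
    rw [one_mul, hRr]
    exact hdr


lemma fd_unique {m : ℕ} (hm : Odd m) {a : ℤ} (ha : IsCoprime a (m : ℤ)) {k : ℕ}
    (hk : k ∈ Finset.Ico 1 (m / 2 + 1)) {e : ℤ} {j : ℕ}
    (he : e = 1 ∨ e = -1) (hj1 : 1 ≤ j) (hj2 : j ≤ m / 2)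
    (hd : (m : ℤ) ∣ a * k - e * j) :
    sg m a k = e ∧ fd m a k = j := by
  obtain ⟨hf1, hf2, hf3⟩ := fd_spec hm ha hk
  obtain ⟨t, ht⟩ := hm
  have hdd : (m : ℤ) ∣ e * j - sg m a k * fd m a k := by
    have := dvd_sub hf3 hd
    have h : a * ↑k - sg m a k * ↑(fd m a k) - (a * ↑k - e * ↑j)
        = e * j - sg m a k * fd m a k := by ring
    rwa [h] at this
  rcases he with rfl | rfl <;> rcases sg_eq m a k with hs | hs <;> rw [hs] at hdd ⊢
  · have : (j : ℤ) - fd m a k = 0 := by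
      apply int_small (by simpa using hdd)
      rw [abs_sub_lt_iff]
      constructor <;> push_cast <;> omega
    have : j = fd m a k := by omega
    exact ⟨rfl, this.symm⟩
  · exfalso
    have hdd' : (m : ℤ) ∣ (j : ℤ) + fd m a k := by
      have h : 1 * ↑j - -1 * ↑(fd m a k) = (j : ℤ) + fd m a k := by ring
      rwa [h] at hdd
    have := Int.le_of_dvd (by push_cast; omega) hdd'
    push_cast at this; omega
  · exfalso
    have hdd' : (m : ℤ) ∣ (j : ℤ) + fd m a k := by
      have h : ((j : ℤ) + fd m a k) = -(-1 * ↑j - 1 * ↑(fd m a k)) := by ring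
      rw [h]; exact (dvd_neg).mpr hdd
    have := Int.le_of_dvd (by push_cast; omega) hdd'
    push_cast at this; omega
  · have : (fd m a k : ℤ) - j = 0 := by
      apply int_small
      · have h : (fd m a k : ℤ) - j = -1 * ↑j - -1 * ↑(fd m a k) := by ring
        rw [h]; exact hdd
      · rw [abs_sub_lt_iff]
        constructor <;> push_cast <;> omega
    have : j = fd m a k := by omega
    exact ⟨rfl, this.symm⟩

lemma fd_mem {m : ℕ} (hm : Odd m) {a : ℤ} (ha : IsCoprime a (m : ℤ)) {k : ℕ}
    (hk : k ∈ Finset.Ico 1 (m / 2 + 1)) : fd m a k ∈ Finset.Ico 1 (m / 2 + 1) := by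
  obtain ⟨h1, h2, _⟩ := fd_spec hm ha hk
  rw [Finset.mem_Ico]; omega

lemma fd_inj {m : ℕ} (hm : Odd m) {a : ℤ} (ha : IsCoprime a (m : ℤ)) {k k' : ℕ}
    (hk : k ∈ Finset.Ico 1 (m / 2 + 1)) (hk' : k' ∈ Finset.Ico 1 (m / 2 + 1))
    (h : fd m a k = fd m a k') : k = k' := by
  obtain ⟨h1, h2, h3⟩ := fd_spec hm ha hk
  obtain ⟨h1', h2', h3'⟩ := fd_spec hm ha hk'
  obtain ⟨t, ht⟩ := hm
  rw [Finset.mem_Ico] at hk hk'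
  rw [← h] at h3'
  by_cases hss : sg m a k' = sg m a k
  · rw [hss] at h3'
    have hd : (m : ℤ) ∣ a * ((k : ℤ) - k') := by
      have := dvd_sub h3 h3'
      have heq : a * ↑k - sg m a k * ↑(fd m a k) - (a * ↑k' - sg m a k * ↑(fd m a k))
          = a * ((k : ℤ) - k') := by ring
      rwa [heq] at this
    have hd2 : (m : ℤ) ∣ (k : ℤ) - k' := (ha.symm).dvd_of_dvd_mul_left hd
    have : (k : ℤ) - k' = 0 := by
      apply int_small hd2
      rw [abs_sub_lt_iff]
      constructor <;> push_cast <;> omega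
    omega
  · exfalso
    have hneg : sg m a k' = -sg m a k := by
      rcases sg_eq m a k with hs | hs <;> rcases sg_eq m a k' with hs' | hs' <;>
        simp [hs, hs'] at hss ⊢
    rw [hneg] at h3'
    have hd : (m : ℤ) ∣ a * ((k : ℤ) + k') := by
      have := dvd_add h3 h3'
      have heq : a * ↑k - sg m a k * ↑(fd m a k) + (a * ↑k' - -sg m a k * ↑(fd m a k))
          = a * ((k : ℤ) + k') := by ring
      rwa [heq] at this
    have hd2 : (m : ℤ) ∣ (k : ℤ) + k' := (ha.symm).dvd_of_dvd_mul_left hd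
    have := Int.le_of_dvd (by push_cast; omega) hd2
    push_cast at this; omega


lemma fd_surj {m : ℕ} (hm : Odd m) {a : ℤ} (ha : IsCoprime a (m : ℤ)) :
    ∀ j ∈ Finset.Ico 1 (m / 2 + 1), ∃ k, ∃ hk : k ∈ Finset.Ico 1 (m / 2 + 1), fd m a k = j := by
  have := Finset.surj_on_of_inj_on_of_card_le (s := Finset.Ico 1 (m / 2 + 1))
    (t := Finset.Ico 1 (m / 2 + 1)) (fun k _ => fd m a k)
    (fun k hk => fd_mem hm ha hk) (fun k k' hk hk' h => fd_inj hm ha hk hk' h) le_rfl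
  intro j hj
  obtain ⟨k, hk, h⟩ := this j hj
  exact ⟨k, hk, h.symm⟩

lemma prod_fd_reindex {M : Type*} [CommMonoid M] {m : ℕ} (hm : Odd m) {a : ℤ}
    (ha : IsCoprime a (m : ℤ)) (h : ℕ → M) :
    ∏ k ∈ Finset.Ico 1 (m / 2 + 1), h (fd m a k) = ∏ k ∈ Finset.Ico 1 (m / 2 + 1), h k :=
  Finset.prod_bij (fun k _ => fd m a k) (fun k hk => fd_mem hm ha hk)
    (fun k hk k' hk' hh => fd_inj hm ha hk hk' hh) (fd_surj hm ha) (fun _ _ => rfl)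

lemma sum_fd_reindex {M : Type*} [AddCommMonoid M] {m : ℕ} (hm : Odd m) {a : ℤ}
    (ha : IsCoprime a (m : ℤ)) (h : ℕ → M) :
    ∑ k ∈ Finset.Ico 1 (m / 2 + 1), h (fd m a k) = ∑ k ∈ Finset.Ico 1 (m / 2 + 1), h k :=
  Finset.sum_bij (fun k _ => fd m a k) (fun k hk => fd_mem hm ha hk)
    (fun k hk k' hk' hh => fd_inj hm ha hk hk' hh) (fd_surj hm ha) (fun _ _ => rfl)

lemma sg_mul {m : ℕ} (hm : Odd m) {a b : ℤ} (ha : IsCoprime a (m : ℤ))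
    (hb : IsCoprime b (m : ℤ)) {k : ℕ} (hk : k ∈ Finset.Ico 1 (m / 2 + 1)) :
    sg m (a * b) k = sg m a (fd m b k) * sg m b k := by
  obtain ⟨hb1, hb2, hb3⟩ := fd_spec hm hb hk
  have hk' : fd m b k ∈ Finset.Ico 1 (m / 2 + 1) := fd_mem hm hb hk
  obtain ⟨ha1, ha2, ha3⟩ := fd_spec hm ha hk'
  have hab : IsCoprime (a * b) (m : ℤ) := ha.mul_left hb
  have he : sg m a (fd m b k) * sg m b k = 1 ∨ sg m a (fd m b k) * sg m b k = -1 := by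
    rcases sg_eq m a (fd m b k) with h1 | h1 <;> rcases sg_eq m b k with h2 | h2 <;>
      rw [h1, h2] <;> norm_num
  have hd : (m : ℤ) ∣ (a * b) * k -
      (sg m a (fd m b k) * sg m b k) * (fd m a (fd m b k)) := by
    have h1 := Dvd.dvd.mul_left hb3 a
    have h2 := Dvd.dvd.mul_left ha3 (sg m b k)
    have heq : a * (b * ↑k - sg m b k * ↑(fd m b k))
        + sg m b k * (a * ↑(fd m b k) - sg m a (fd m b k) * ↑(fd m a (fd m b k)))
        = (a * b) * k - (sg m a (fd m b k) * sg m b k) * (fd m a (fd m b k)) := by ring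
    have := dvd_add h1 h2
    rwa [heq] at this
  exact (fd_unique hm hab hk he (fd_spec hm ha hk').1 (fd_spec hm ha hk').2.1 hd).1

lemma G_mul {m : ℕ} (hm : Odd m) {a b : ℤ} (ha : IsCoprime a (m : ℤ))
    (hb : IsCoprime b (m : ℤ)) : G m (a * b) = G m a * G m b := by
  unfold G
  rw [Finset.prod_congr rfl (fun k hk => sg_mul hm ha hb hk),
    Finset.prod_mul_distrib, prod_fd_reindex hm hb (sg m a)]

lemma G_eq_pow (m : ℕ) (a : ℤ) :
    G m a = (-1) ^ ((Finset.Ico 1 (m / 2 + 1)).filter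
      (fun k => (m : ℤ) < 2 * r m a k)).card := by
  unfold G sg
  rw [Finset.prod_ite, Finset.prod_const, Finset.prod_const_one, mul_one]

lemma G_sq {m : ℕ} (a : ℤ) : G m a * G m a = 1 := by
  rw [G_eq_pow, ← pow_add, ← two_mul, pow_mul]
  norm_num

lemma G_mod (m : ℕ) (a : ℤ) : G m (a % m) = G m a := by
  unfold G sg r
  have h : ∀ k : ℕ, (a % m * k) % (m : ℤ) = (a * k) % m := fun k => by
    rw [Int.mul_emod, Int.emod_emod_of_dvd _ dvd_rfl, ← Int.mul_emod]
  simp_rw [h]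

lemma G_one {m : ℕ} (hm : Odd m) : G m 1 = 1 := by
  unfold G sg r
  apply Finset.prod_eq_one
  intro k hk
  obtain ⟨t, ht⟩ := hm
  rw [Finset.mem_Ico] at hk
  rw [if_neg]
  rw [one_mul]
  have hkm : ((k : ℤ)) % m = k := by
    rw [Int.emod_eq_of_lt (by positivity) (by push_cast; omega)]
  rw [hkm]
  push_cast
  omega


lemma filter_two {m : ℕ} (hm : Odd m) :
    (Finset.Ico 1 (m / 2 + 1)).filter (fun k => (m : ℤ) < 2 * r m 2 k)
      = Finset.Ico (m / 4 + 1) (m / 2 + 1) := by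
  obtain ⟨t, ht⟩ := hm
  ext k
  simp only [Finset.mem_filter, Finset.mem_Ico]
  simp only [r]
  constructor
  · rintro ⟨⟨hk1, hk2⟩, hc⟩
    have h2k : ((2 : ℤ) * k) % m = 2 * k :=
      Int.emod_eq_of_lt (by positivity) (by push_cast; omega)
    rw [h2k] at hc
    omega
  · rintro ⟨hk1, hk2⟩
    have h2k : ((2 : ℤ) * k) % m = 2 * k :=
      Int.emod_eq_of_lt (by positivity) (by push_cast; omega)
    rw [h2k]
    refine ⟨⟨by omega, by omega⟩, by push_cast; omega⟩

lemma G_two {m : ℕ} (hm : Odd m) : G m 2 = jacobiSym 2 m := by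
  rw [jacobiSym.at_two hm, G_eq_pow, filter_two hm, Nat.card_Ico,
    ZMod.χ₈_nat_eq_if_mod_eight]
  have h2 : m % 2 = 1 := Nat.odd_iff.mp hm
  have h8 : m % 8 = 1 ∨ m % 8 = 3 ∨ m % 8 = 5 ∨ m % 8 = 7 := by omega
  rw [if_neg (by omega)]
  rcases h8 with h | h | h | h
  · rw [if_pos (by omega)]
    exact Even.neg_one_pow (Nat.even_iff.mpr (by omega))
  · rw [if_neg (by omega)]
    exact Odd.neg_one_pow (Nat.odd_iff.mpr (by omega))
  · rw [if_neg (by omega)]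
    exact Odd.neg_one_pow (Nat.odd_iff.mpr (by omega))
  · rw [if_pos (by omega)]
    exact Even.neg_one_pow (Nat.even_iff.mpr (by omega))

lemma eis {m A : ℕ} (hm : Odd m) (hA : Odd A) (hco : IsCoprime ((A : ℕ) : ℤ) (m : ℤ)) :
    ((Finset.Ico 1 (m / 2 + 1)).filter (fun k => (m : ℤ) < 2 * r m A k)).card
      ≡ ∑ k ∈ Finset.Ico 1 (m / 2 + 1), A * k / m [MOD 2] := by
  apply (ZMod.natCast_eq_natCast_iff _ _ _).mp
  push_cast
  have hm2 : ((m : ℕ) : ZMod 2) = 1 := by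
    have h1 : m % 2 = 1 := Nat.odd_iff.mp hm
    rw [← Nat.mod_add_div m 2, h1]
    push_cast [ZMod.natCast_self]
    rw [show (2 : ZMod 2) = 0 from rfl]
    ring
  have hA2 : ((A : ℕ) : ZMod 2) = 1 := by
    have h1 : A % 2 = 1 := Nat.odd_iff.mp hA
    rw [← Nat.mod_add_div A 2, h1]
    push_cast [ZMod.natCast_self]
    rw [show (2 : ZMod 2) = 0 from rfl]
    ring
  set S := Finset.Ico 1 (m / 2 + 1) with hS
  set N := (S.filter (fun k => (m : ℤ) < 2 * r m A k)).card with hNdef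
  have hm0 : 0 < m := hm.pos
  have hrk : ∀ k ∈ S, (((A * k) : ℕ) : ZMod 2)
      = ((A * k / m : ℕ) : ZMod 2) + (((fd m A k : ℕ)) : ZMod 2)
        + (if (m : ℤ) < 2 * r m A k then 1 else 0) := by
    intro k hk
    have hfds := fd_spec hm hco hk
    have hRr : ((A * k % m : ℕ) : ℤ) = r m (A : ℤ) k := by
      unfold r
      rw [Int.natCast_mod]
      push_cast
      ring
    have h1 : (r m (A : ℤ) k).toNat = A * k % m := by
      rw [← hRr, Int.toNat_natCast]
    have hfdval : fd m A k = if (m : ℤ) < 2 * r m (A : ℤ) k then m - A * k % m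
        else A * k % m := by
      unfold fd
      rw [h1]
    have hmlt : A * k % m < m := Nat.mod_lt _ hm0
    conv_lhs => rw [← Nat.div_add_mod (A * k) m]
    push_cast
    rw [hm2, one_mul]
    rw [add_assoc]
    congr 1
    split
    next hb =>
      have hfd2 : A * k % m = m - fd m A k := by
        rw [hfdval, if_pos hb]; omega
      rw [hfd2, Nat.cast_sub (by omega), hm2]
      have : ∀ x : ZMod 2, 1 - x = x + 1 := by decide
      exact this _
    next hb =>
      rw [hfdval, if_neg hb, add_zero]
  have hsum : ∑ k ∈ S, ((A * k : ℕ) : ZMod 2)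
      = (∑ k ∈ S, ((A * k / m : ℕ) : ZMod 2)) + (∑ k ∈ S, ((fd m A k : ℕ) : ZMod 2))
        + (N : ZMod 2) := by
    rw [Finset.sum_congr rfl hrk, Finset.sum_add_distrib, Finset.sum_add_distrib,
      Finset.sum_boole]
  have hL : ∑ k ∈ S, ((A * k : ℕ) : ZMod 2) = ∑ k ∈ S, ((k : ℕ) : ZMod 2) := by
    apply Finset.sum_congr rfl
    intro k hk
    push_cast
    rw [hA2, one_mul]
  have hfd : ∑ k ∈ S, ((fd m A k : ℕ) : ZMod 2) = ∑ k ∈ S, ((k : ℕ) : ZMod 2) :=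
    sum_fd_reindex hm hco _
  rw [hL, hfd] at hsum
  have trick : ∀ x y z : ZMod 2, x = y + x + z → z = y := by decide
  exact trick _ _ _ hsum


lemma sum_Ico_eq_card_lt' {p q : ℕ} :
    ∑ a ∈ Finset.Ico 1 (p / 2 + 1), a * q / p =
      #{x ∈ Finset.Ico 1 (p / 2 + 1) ×ˢ Finset.Ico 1 (q / 2 + 1) | x.2 * p ≤ x.1 * q} :=
  if hp0 : p = 0 then by simp [hp0, Finset.ext_iff]
  else
    calc
      ∑ a ∈ Finset.Ico 1 (p / 2 + 1), a * q / p =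
          ∑ a ∈ Finset.Ico 1 (p / 2 + 1), #{x ∈ Finset.Ico 1 (q / 2 + 1) | x * p ≤ a * q} :=
        Finset.sum_congr rfl fun x hx =>
          ZMod.div_eq_filter_card (Nat.pos_of_ne_zero hp0) <|
            calc
              x * q / p ≤ p / 2 * q / p := by
                have := Nat.le_of_lt_succ (Finset.mem_Ico.mp hx).2; gcongr
              _ ≤ _ := Nat.div_mul_div_le_div _ _ _
      _ = _ := by
        rw [← Finset.card_sigma]
        exact Finset.card_nbij' (fun a ↦ ⟨a.1, a.2⟩) (fun a ↦ ⟨a.1, a.2⟩)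
          (by simp +contextual only [Set.MapsTo, Finset.mem_coe, Finset.mem_filter, Finset.mem_sigma, and_self_iff,
            forall_true_iff, Finset.mem_product])
          (by simp +contextual only [Set.MapsTo, Finset.mem_coe, Finset.mem_filter, Finset.mem_sigma, and_self_iff,
            forall_true_iff, Finset.mem_product]) (fun _ _ ↦ rfl) (fun _ _ ↦ rfl)

lemma lattice {p q : ℕ} (hp : 0 < p) (hq : 0 < q) (hco : Nat.Coprime p q) :
    ∑ a ∈ Finset.Ico 1 (p / 2 + 1), a * q / p + ∑ a ∈ Finset.Ico 1 (q / 2 + 1), a * p / q =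
      p / 2 * (q / 2) := by
  have hswap :
      #{x ∈ Finset.Ico 1 (q / 2 + 1) ×ˢ Finset.Ico 1 (p / 2 + 1) | x.2 * q ≤ x.1 * p} =
        #{x ∈ Finset.Ico 1 (p / 2 + 1) ×ˢ Finset.Ico 1 (q / 2 + 1) | x.1 * q ≤ x.2 * p} :=
    Finset.card_equiv (Equiv.prodComm _ _)
      (fun ⟨_, _⟩ => by
        simp +contextual only [Finset.mem_filter, and_self_iff, Prod.swap_prod_mk,
          forall_true_iff, Finset.mem_product, Equiv.prodComm_apply, and_assoc, and_left_comm])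
  have hdisj :
      Disjoint {x ∈ Finset.Ico 1 (p / 2 + 1) ×ˢ Finset.Ico 1 (q / 2 + 1) | x.2 * p ≤ x.1 * q}
        {x ∈ Finset.Ico 1 (p / 2 + 1) ×ˢ Finset.Ico 1 (q / 2 + 1) | x.1 * q ≤ x.2 * p} := by
    apply Finset.disjoint_filter.2 fun x hx hpq hqp => ?_
    rw [Finset.mem_product, Finset.mem_Ico, Finset.mem_Ico] at hx
    have heq : x.1 * q = x.2 * p := le_antisymm hqp hpq
    have hdvd : p ∣ x.1 * q := ⟨x.2, by rw [heq, Nat.mul_comm]⟩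
    have : p ∣ x.1 := hco.dvd_of_dvd_mul_right hdvd
    have := Nat.le_of_dvd (by omega) this
    have : p / 2 < p := Nat.div_lt_self hp (by omega)
    omega
  have hunion :
      {x ∈ Finset.Ico 1 (p / 2 + 1) ×ˢ Finset.Ico 1 (q / 2 + 1) | x.2 * p ≤ x.1 * q} ∪
        {x ∈ Finset.Ico 1 (p / 2 + 1) ×ˢ Finset.Ico 1 (q / 2 + 1) | x.1 * q ≤ x.2 * p} =
      Finset.Ico 1 (p / 2 + 1) ×ˢ Finset.Ico 1 (q / 2 + 1) :=
    Finset.ext fun x => by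
      have := le_total (x.2 * p) (x.1 * q)
      simp only [Finset.mem_union, Finset.mem_filter, Finset.mem_Ico, Finset.mem_product]
      tauto
  rw [sum_Ico_eq_card_lt', sum_Ico_eq_card_lt', hswap, ← Finset.card_union_of_disjoint hdisj,
    hunion, Finset.card_product]
  simp only [Nat.card_Ico, Nat.add_sub_cancel]

lemma neg_one_pow_congr {x y : ℕ} (h : x ≡ y [MOD 2]) : ((-1 : ℤ)) ^ x = (-1) ^ y := by
  rw [neg_one_pow_eq_pow_mod_two, h, ← neg_one_pow_eq_pow_mod_two]

lemma recip {m A : ℕ} (hm : Odd m) (hA : Odd A) (hco : Nat.Coprime A m) :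
    ((Finset.Ico 1 (m / 2 + 1)).filter (fun k => (m : ℤ) < 2 * r m A k)).card
      + ((Finset.Ico 1 (A / 2 + 1)).filter (fun k => (A : ℤ) < 2 * r A m k)).card
      ≡ m / 2 * (A / 2) [MOD 2] := by
  have h1 := eis hm hA (Nat.isCoprime_iff_coprime.mpr hco)
  have h2 := eis hA hm (Nat.isCoprime_iff_coprime.mpr hco.symm)
  have h3 : (∑ k ∈ Finset.Ico 1 (m / 2 + 1), A * k / m)
      + (∑ k ∈ Finset.Ico 1 (A / 2 + 1), m * k / A) = m / 2 * (A / 2) := by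
    rw [Finset.sum_congr rfl (fun k _ => by rw [Nat.mul_comm A k]),
      Finset.sum_congr (rfl : Finset.Ico 1 (A / 2 + 1) = _) (fun k _ => by rw [Nat.mul_comm m k])]
    exact lattice hm.pos hA.pos hco.symm
  exact (h1.add h2).trans (h3 ▸ Nat.ModEq.refl _)

lemma G_recip {m A : ℕ} (hm : Odd m) (hA : Odd A) (hco : Nat.Coprime A m) :
    G m A * G A m = (-1) ^ (m / 2 * (A / 2)) := by
  rw [G_eq_pow, G_eq_pow, ← pow_add]
  exact neg_one_pow_congr (recip hm hA hco)


lemma jacobi_eq_G : ∀ m : ℕ, Odd m → ∀ a : ℤ, IsCoprime a (m : ℤ) → jacobiSym a m = G m a := by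
  intro m
  induction m using Nat.strong_induction_on with
  | _ m IH =>
  intro hm a ha
  by_cases hm1 : m = 1
  · subst hm1
    rw [jacobiSym.one_right]
    unfold G
    norm_num
  · have hm2 : 1 < m := by have := hm.pos; omega
    rw [jacobiSym.mod_left a m, ← G_mod]
    set b : ℤ := a % m with hbdef
    have hb0 : 0 ≤ b := Int.emod_nonneg a (by exact_mod_cast hm.pos.ne')
    have hbm : b < m := Int.emod_lt_of_pos a (by exact_mod_cast hm.pos)
    have hbco : IsCoprime b (m : ℤ) := by
      have h := ha.add_mul_left_left (-(a / (m : ℤ)))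
      rwa [show a + (m : ℤ) * -(a / m) = a % m by rw [Int.emod_def]; ring] at h
    have inner : ∀ B : ℕ, B < m → IsCoprime ((B : ℕ) : ℤ) (m : ℤ) →
        jacobiSym B m = G m B := by
      intro B
      induction B using Nat.strong_induction_on with
      | _ B IH2 =>
      intro hBm hBco
      have hB0 : B ≠ 0 := by
        rintro rfl
        rw [Nat.cast_zero, isCoprime_zero_left, Int.isUnit_iff] at hBco
        rcases hBco with h | h
        · have : m = 1 := by exact_mod_cast h
          omega
        · have : (0 : ℤ) ≤ m := by positivity
          omega
      by_cases hB1 : B = 1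
      · subst hB1
        rw [Nat.cast_one, jacobiSym.one_left, G_one hm]
      · rcases Nat.even_or_odd B with hBe | hBo
        · obtain ⟨C, rfl⟩ := hBe
          have hc : ((C + C : ℕ) : ℤ) = 2 * (C : ℤ) := by push_cast; ring
          have hCco : IsCoprime ((C : ℕ) : ℤ) (m : ℤ) := by
            rw [hc] at hBco
            exact hBco.of_mul_left_right
          have h2co : IsCoprime (2 : ℤ) (m : ℤ) := by
            have hdvd : ¬ 2 ∣ m := by obtain ⟨t, ht⟩ := hm; omega
            have hn : Nat.Coprime 2 m := (Nat.prime_two.coprime_iff_not_dvd).mpr hdvd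
            exact_mod_cast Nat.isCoprime_iff_coprime.mpr hn
          have hCB : C < C + C := by omega
          have hCm : C < m := by omega
          rw [hc, jacobiSym.mul_left, G_mul hm h2co hCco, G_two hm,
            ← IH2 C hCB hCm hCco]
        · have hco' : Nat.Coprime B m := Nat.isCoprime_iff_coprime.mp hBco
          have hrec := jacobiSym.quadratic_reciprocity hBo hm
          have hIH := IH B hBm hBo ((m : ℕ) : ℤ) (Nat.isCoprime_iff_coprime.mpr hco'.symm)
          rw [hrec, hIH, Nat.mul_comm (B / 2) (m / 2), ← G_recip hm hBo hco',
            mul_assoc, G_sq, mul_one]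
    have hbB : b = ((b.toNat : ℕ) : ℤ) := (Int.toNat_of_nonneg hb0).symm
    rw [hbB]
    apply inner
    · omega
    · rw [← hbB]; exact hbco

end Stmt12

/-- **Jenkins' generalization of Gauss' lemma.** Let `m` be a positive odd
integer and `a ∈ ℤ` with `gcd(a,m) = 1`. Then the Jacobi symbol `(a/m)` equals `(-1)^N`, where
`N = #{k : 0 < k < m/2, {ak}_m > m/2}`, and moreover `(a/m) = (-1)^{K_a}` with
`K_a = ∑_{0<k<m/2} ⌊2ak/m⌋`. -/
theorem stmt_12 (m : ℕ) (hm : 0 < m) (hodd : Odd m) (a : ℤ) (ha : IsCoprime a (m : ℤ)) :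
    jacobiSym a m =
      (-1 : ℤ) ^
        ((Finset.range m).filter
          (fun k => 0 < k ∧ 2 * k < m ∧ (m : ℤ) < 2 * ((a * k) % (m : ℤ)))).card ∧
    jacobiSym a m =
      (((-1 : ℤˣ) ^
        (∑ k ∈ (Finset.range m).filter (fun k => 0 < k ∧ 2 * k < m),
          Int.fdiv (2 * a * k) m) : ℤˣ) : ℤ) := by
  obtain ⟨t, ht⟩ := id hodd
  have hm0 : (0 : ℤ) < m := by exact_mod_cast hm
  have hset1 : ((Finset.range m).filter
      (fun k => 0 < k ∧ 2 * k < m ∧ (m : ℤ) < 2 * ((a * k) % (m : ℤ))))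
      = (Finset.Ico 1 (m / 2 + 1)).filter (fun k => (m : ℤ) < 2 * Stmt12.r m a k) := by
    ext k
    simp only [Finset.mem_filter, Finset.mem_range, Finset.mem_Ico]
    simp only [Stmt12.r]
    constructor
    · rintro ⟨h1, h2, h3, h4⟩
      exact ⟨⟨by omega, by omega⟩, h4⟩
    · rintro ⟨⟨h1, h2⟩, h3⟩
      exact ⟨by omega, by omega, by omega, h3⟩
  have hset2 : ((Finset.range m).filter (fun k => 0 < k ∧ 2 * k < m))
      = Finset.Ico 1 (m / 2 + 1) := by
    ext k
    simp only [Finset.mem_filter, Finset.mem_range, Finset.mem_Ico]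
    omega
  have hmain := Stmt12.jacobi_eq_G m hodd a ha
  have hpow := Stmt12.G_eq_pow m a
  constructor
  · rw [hset1, hmain, hpow]
  · rw [hset2]
    have key : ∀ k ∈ Finset.Ico 1 (m / 2 + 1), Int.fdiv (2 * a * k) m
        = 2 * ((a * (k : ℤ)) / (m : ℤ)) + (if (m : ℤ) < 2 * Stmt12.r m a k then 1 else 0) := by
      intro k hk
      obtain ⟨hr0, hr1, hr2⟩ := Stmt12.r_bounds hodd ha hk
      rw [Int.fdiv_eq_ediv_of_nonneg _ (le_of_lt hm0)]
      have hde : (m : ℤ) * ((a * k) / m) + Stmt12.r m a k = a * k := Int.mul_ediv_add_emod _ _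
      have h2 : 2 * a * (k : ℤ) = 2 * Stmt12.r m a k + (2 * ((a * k) / (m : ℤ))) * m := by
        linear_combination (-2 : ℤ) * hde
      rw [h2, Int.add_mul_ediv_right _ _ (ne_of_gt hm0)]
      split
      · next hb =>
        have h1 : (2 * Stmt12.r m a k) / (m : ℤ) = 1 := by
          rw [show 2 * Stmt12.r m a k = (2 * Stmt12.r m a k - m) + 1 * m by ring,
            Int.add_mul_ediv_right _ _ (ne_of_gt hm0),
            Int.ediv_eq_zero_of_lt (by omega) (by omega)]
          norm_num
        rw [h1]; ring
      · next hb =>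
        have h1 : (2 * Stmt12.r m a k) / (m : ℤ) = 0 :=
          Int.ediv_eq_zero_of_lt (by omega) (by omega)
        rw [h1]; ring
    rw [Finset.sum_congr rfl key, Finset.sum_add_distrib, Finset.sum_boole, ← Finset.mul_sum]
    have h2pow : ((-1 : ℤˣ) ^ (2 : ℤ)) = 1 := by decide
    have hzpow : ∀ (T' : ℤ) (N' : ℕ),
        (((-1 : ℤˣ) ^ (2 * T' + (N' : ℤ)) : ℤˣ) : ℤ) = (-1 : ℤ) ^ N' := by
      intro T' N'
      rw [zpow_add, zpow_mul, h2pow, one_zpow, one_mul, zpow_natCast]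
      rw [Units.val_pow_eq_pow_val, Units.val_neg, Units.val_one]
    rw [hzpow, hmain, hpow]
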